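/- For m = 2 and partitions of the form λ = (λ_1, 0), the Newton polytope of the inflated symmetric Grothendieck polynomial G_{h,λ}(x_1,x_2) is reflexive if and only if λ = (3,0) and h ≥ 2. In particular, for h ≥ 3 this polytope is the triangle with vertices (3,0), (3,3), (0,3), with unique interior lattice point (2,2). -/

import Mathlib

/-- `mu` is a partition with at most `m` parts (weakly decreasing entries). -/
def IsPartition (m : ℕ) (mu : Fin m → ℕ) : Prop := ∀ i j : Fin m, i ≤ j → mu j ≤ mu i

/-- A filling of the skew shape `μ/λ` that increases strictly along each row and each
column, with entries in row `r` (0-indexed) taken from `{1, ..., h·r}` (i.e. row `r+1`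
in 1-indexed terms gets entries from `{1, ..., h(r+1-1)}`). These are the fillings
counted by `b_{h,λμ}`. -/
structure SkewFilling (m h : ℕ) (lam mu : Fin m → ℕ) where
  entry : Fin m → ℕ → ℕ
  one_le : ∀ i j, lam i ≤ j → j < mu i → 1 ≤ entry i j
  upper : ∀ i j, lam i ≤ j → j < mu i → entry i j ≤ h * i.1
  row_strict : ∀ i j k, lam i ≤ j → j < k → k < mu i → entry i j < entry i k
  col_strict : ∀ i k : Fin m, ∀ j, i < k → lam i ≤ j → j < mu i → lam k ≤ j → j < mu k →
    entry i j < entry k j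

/-- `μ ∈ A(h,λ)`: `μ` is a partition containing `λ` with `b_{h,λμ} ≠ 0`,
i.e. admitting at least one valid skew filling of `μ/λ`. -/
def AMem (m h : ℕ) (lam mu : Fin m → ℕ) : Prop :=
  IsPartition m mu ∧ (∀ i, lam i ≤ mu i) ∧ Nonempty (SkewFilling m h lam mu)

/-- A box may be added to row `r` of `nu` (relative to base partition `lam`):
fewer than `h·r` boxes have been added to row `r` so far, and the result is
still a partition. -/
def Addable (m h : ℕ) (lam nu : Fin m → ℕ) (r : Fin m) : Prop :=
  nu r - lam r < h * r.1 ∧ ∀ q : Fin m, q.1 + 1 = r.1 → nu r < nu q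

open scoped Classical in
/-- One step in the construction of the sequence of dominating partitions:
add a box in the smallest addable row (if any). -/
noncomputable def domStep (m h : ℕ) (lam nu : Fin m → ℕ) : Fin m → ℕ :=
  if hne : (Finset.univ.filter (Addable m h lam nu)).Nonempty then
    Function.update nu ((Finset.univ.filter (Addable m h lam nu)).min' hne)
      (nu ((Finset.univ.filter (Addable m h lam nu)).min' hne) + 1)
  else nu

/-- The sequence of dominating partitions `λ^{(0)} = λ, λ^{(1)}, λ^{(2)}, ...`
for the inflated symmetric Grothendieck polynomial `G_{h,λ}`. -/
noncomputable def domSeq (m h : ℕ) (lam : Fin m → ℕ) : ℕ → Fin m → ℕ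
  | 0 => lam
  | k + 1 => domStep m h lam (domSeq m h lam k)

/-- Dominance order: `a` dominates `b` if all partial sums of `a` are at least
those of `b`. -/
def Dominates (m : ℕ) (a b : Fin m → ℕ) : Prop :=
  ∀ r : Fin m, ∑ i ∈ Finset.univ.filter (fun i => i ≤ r), b i ≤
    ∑ i ∈ Finset.univ.filter (fun i => i ≤ r), a i

/-- The `ν`-permutohedron: the convex hull of all coordinate permutations of
`(ν_1, ..., ν_m)` in `ℝ^m`; this is the Newton polytope of the Schur polynomial `s_ν`. -/
def permPoly (m : ℕ) (nu : Fin m → ℕ) : Set (Fin m → ℝ) :=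
  convexHull ℝ {x : Fin m → ℝ | ∃ σ : Equiv.Perm (Fin m), x = fun i => (nu (σ i) : ℝ)}

/-- The Newton polytope of the inflated symmetric Grothendieck polynomial
`G_{h,λ}(x) = Σ_{μ ∈ A(h,λ)} (−1)^{|μ/λ|} b_{h,λμ} s_μ(x)`: since within each
homogeneous degree all coefficients have the same sign (no cancellation), it is the
convex hull of the exponent vectors of the `s_μ`, `μ ∈ A(h,λ)`, i.e. the convex hull
of the `S_m`-orbits of the partitions in `A(h,λ)`. -/
def NewtG (m h : ℕ) (lam : Fin m → ℕ) : Set (Fin m → ℝ) :=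
  convexHull ℝ {x : Fin m → ℝ | ∃ mu : Fin m → ℕ, AMem m h lam mu ∧
    ∃ σ : Equiv.Perm (Fin m), x = fun i => (mu (σ i) : ℝ)}

/-- A (possibly lower-dimensional) lattice polytope `P` is reflexive with respect to the
lattice point `p` if: `p` lies in the relative (intrinsic) interior of `P`, it is the
unique lattice point there, and `p` is at lattice distance 1 from every facet of `P`,
i.e. for every facet (an exposed face of dimension `dim P − 1`, exposed by a linear
functional `f`) there is no lattice point of the affine span of `P` whose `f`-value lies
strictly between `f p` and the value of `f` on the facet. -/
def ReflexivePolytope (m : ℕ) (P : Set (Fin m → ℝ)) (p : Fin m → ℤ) : Prop :=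
  (fun i => (p i : ℝ)) ∈ intrinsicInterior ℝ P ∧
  (∀ q : Fin m → ℤ, (fun i => (q i : ℝ)) ∈ intrinsicInterior ℝ P → q = p) ∧
  ∀ (f : (Fin m → ℝ) →ₗ[ℝ] ℝ) (F : Set (Fin m → ℝ)), F.Nonempty →
    F = {x ∈ P | ∀ y ∈ P, f y ≤ f x} →
    Module.finrank ℝ ↥(vectorSpan ℝ F) + 1 = Module.finrank ℝ ↥(vectorSpan ℝ P) →
    ∀ x ∈ F, ∀ z : Fin m → ℤ,
      (fun i => (z i : ℝ)) ∈ affineSpan ℝ P →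
      ¬(f (fun i => (p i : ℝ)) < f (fun i => (z i : ℝ)) ∧
        f (fun i => (z i : ℝ)) < f x)

/-- For `m = 2` and nonzero partitions λ = (λ_1, 0): the Newton polytope of the
inflated symmetric Grothendieck polynomial `G_{h,λ}(x_1,x_2)` is reflexive if and only
if `λ = (3,0)` and `h ≥ 2`. In particular, for `h ≥ 3` this polytope is the triangle
with vertices `(3,0)`, `(3,3)`, `(0,3)`, with unique interior lattice point `(2,2)`. -/

def Kset (L C : ℝ) : Set (Fin 2 → ℝ) :=
  {x | x 0 ≤ L ∧ x 1 ≤ L ∧ L ≤ x 0 + x 1 ∧ x 0 + x 1 ≤ L + C}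

lemma Kset_convex (L C : ℝ) : Convex ℝ (Kset L C) := by
  intro x hx y hy a b ha hb hab
  obtain ⟨h1, h2, h3, h4⟩ := hx
  obtain ⟨h5, h6, h7, h8⟩ := hy
  refine ⟨?_, ?_, ?_, ?_⟩ <;> simp only [Pi.add_apply, Pi.smul_apply, smul_eq_mul] <;> nlinarith

lemma combo3_mem {S : Set (Fin 2 → ℝ)} {p q r : Fin 2 → ℝ} (hp : p ∈ S) (hq : q ∈ S) (hr : r ∈ S)
    {a b d : ℝ} (ha : 0 ≤ a) (hb : 0 ≤ b) (hd : 0 ≤ d) (hsum : a + b + d = 1) {x : Fin 2 → ℝ}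
    (hx : x = a • p + b • q + d • r) : x ∈ convexHull ℝ S := by
  have := Finset.centerMass_mem_convexHull (Finset.univ : Finset (Fin 3)) (w := ![a, b, d])
    (z := ![p, q, r]) (by intro i _; fin_cases i <;> simpa) (by simp [Fin.sum_univ_three, hsum])
    (by intro i _; fin_cases i <;> simpa)
  simpa [Finset.centerMass, Fin.sum_univ_three, hsum, hx] using this

lemma K_subset_hull {L C : ℝ} (hC : 0 < C) (hCL : C ≤ L) {S : Set (Fin 2 → ℝ)}
    (hA : ![L, 0] ∈ S) (hB : ![L, C] ∈ S) (hC' : ![C, L] ∈ S) (hD : ![(0:ℝ), L] ∈ S) :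
    Kset L C ⊆ convexHull ℝ S := by
  have hL : 0 < L := lt_of_lt_of_le hC hCL
  rintro x ⟨h1, h2, h3, h4⟩
  rcases eq_or_lt_of_le hCL with hEq | hLt
  · -- triangle: C = L
    subst hEq
    refine combo3_mem hA hB hD (a := (C - x 1)/C) (b := (x 0 + x 1 - C)/C) (d := (C - x 0)/C)
      (by apply div_nonneg <;> linarith) (by apply div_nonneg <;> linarith)
      (by apply div_nonneg <;> linarith) (by field_simp; ring) ?_
    funext i
    fin_cases i <;> simp [Matrix.cons_val_zero, Matrix.cons_val_one] <;> field_simp <;> ring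
  · rcases le_total (L * x 0 + (L - C) * x 1) (L ^ 2) with hcase | hcase
    · refine combo3_mem hA hC' hD (a := (L - x 1)/L) (b := (x 0 + x 1 - L)/C)
        (d := (L ^ 2 - L * x 0 - (L - C) * x 1)/(L * C))
        (by apply div_nonneg <;> linarith) (by apply div_nonneg <;> linarith)
        (by apply div_nonneg <;> nlinarith) ?_ ?_
      · field_simp
        ring
      · funext i
        fin_cases i <;> simp <;> field_simp <;> ring
    · have hLC : 0 < L - C := by linarith
      refine combo3_mem hA hB hC' (a := (L + C - x 0 - x 1)/C)
        (b := (L * x 0 + (L - C) * x 1 - L ^ 2)/(C * (L - C))) (d := (L - x 0)/(L - C))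
        (by apply div_nonneg <;> nlinarith) (by apply div_nonneg <;> nlinarith)
        (by apply div_nonneg <;> linarith) ?_ ?_
      · field_simp
        ring
      · funext i
        fin_cases i <;> simp <;> field_simp <;> ring


lemma interior_halfplane {a b r : ℝ} (hab : a ≠ 0 ∨ b ≠ 0) {x : Fin 2 → ℝ}
    (hx : x ∈ interior {y : Fin 2 → ℝ | a * y 0 + b * y 1 ≤ r}) : a * x 0 + b * x 1 < r := by
  obtain ⟨ε, hε, hball⟩ := Metric.mem_nhds_iff.1 (mem_interior_iff_mem_nhds.1 hx)
  set v : Fin 2 → ℝ := ![a, b] with hv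
  have hvpos : 0 < a ^ 2 + b ^ 2 := by
    rcases hab with h | h <;> positivity
  set δ : ℝ := ε / (2 * (‖v‖ + 1)) with hδ
  have hnv : (0:ℝ) < ‖v‖ + 1 := by positivity
  have hδpos : 0 < δ := by positivity
  have hmem : x + δ • v ∈ Metric.ball x ε := by
    rw [Metric.mem_ball, dist_eq_norm]
    have : x + δ • v - x = δ • v := by ring_nf
    rw [this, norm_smul]
    simp only [Real.norm_eq_abs, abs_of_pos hδpos]
    calc δ * ‖v‖ ≤ δ * (‖v‖ + 1) := by nlinarith [norm_nonneg v]
    _ < ε := by rw [hδ]; rw [div_mul_eq_mul_div]; rw [div_lt_iff₀ (by positivity)]; nlinarith [norm_nonneg v]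
  have h2 := hball hmem
  simp only [Set.mem_setOf_eq, Pi.add_apply, Pi.smul_apply] at h2
  have hv0 : v 0 = a := rfl
  have hv1 : v 1 = b := rfl
  rw [hv0, hv1] at h2
  simp only [smul_eq_mul] at h2
  nlinarith [mul_pos hδpos hvpos]

lemma intrinsic_sub {s : Set (Fin 2 → ℝ)} (h : affineSpan ℝ s = ⊤) : intrinsicInterior ℝ s ⊆ interior s := by
  intro x hx
  obtain ⟨y, hy, rfl⟩ := mem_intrinsicInterior.1 hx
  have hopen : IsOpen ((affineSpan ℝ s : Set (Fin 2 → ℝ))) := by rw [h]; simp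
  have hemb := hopen.isOpenEmbedding_subtypeVal
  
  have hmem : (y : Fin 2 → ℝ) ∈ Subtype.val '' interior (((↑) ⁻¹' s : Set (affineSpan ℝ s))) :=
    ⟨y, hy, rfl⟩
  have h2 := (hemb.isOpenMap.image_interior_subset _) hmem
  refine interior_mono ?_ h2
  rintro _ ⟨z, hz, rfl⟩; exact hz




lemma K_affineSpan {L C : ℝ} (hC : 0 < C) (hCL : C ≤ L) : affineSpan ℝ (Kset L C) = ⊤ := by
  have hL : 0 < L := lt_of_lt_of_le hC hCL
  have hA : ![L, 0] ∈ Kset L C := by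
    refine ⟨by simp, by simp [hL.le], by simp, by simp [hC.le]⟩
  have hB : ![L, C] ∈ Kset L C := by
    refine ⟨by simp, by simpa using hCL, by simp [hC.le], by simp⟩
  have hD : ![(0:ℝ), L] ∈ Kset L C := by
    refine ⟨by simp [hL.le], by simp, by simp, by simp [hC.le]⟩
  refine top_unique fun x _ => ?_
  have hAm := subset_affineSpan ℝ (Kset L C) hA
  have hBm := subset_affineSpan ℝ (Kset L C) hB
  have hDm := subset_affineSpan ℝ (Kset L C) hD
  have hdir1 : ![L, C] -ᵥ ![L, 0] ∈ (affineSpan ℝ (Kset L C)).direction :=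
    AffineSubspace.vsub_mem_direction hBm hAm
  have hdir2 : ![(0:ℝ), L] -ᵥ ![L, 0] ∈ (affineSpan ℝ (Kset L C)).direction :=
    AffineSubspace.vsub_mem_direction hDm hAm
  have hv : x - ![L, 0] =
      ((x 1 - L + x 0)/C) • (![L, C] -ᵥ ![L, 0]) + ((L - x 0)/L) • (![(0:ℝ), L] -ᵥ ![L, 0]) := by
    funext i
    fin_cases i <;>
      simp only [Pi.sub_apply, Pi.add_apply, Pi.smul_apply, vsub_eq_sub, smul_eq_mul,
        Fin.zero_eta, Fin.mk_one, Matrix.cons_val_zero, Matrix.cons_val_one, Matrix.head_cons] <;> field_simp <;> ring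
  have hmem : x - ![L, 0] ∈ (affineSpan ℝ (Kset L C)).direction := by
    rw [hv]
    exact Submodule.add_mem _ (Submodule.smul_mem _ _ hdir1) (Submodule.smul_mem _ _ hdir2)
  have hfin := AffineSubspace.vadd_mem_of_mem_direction hmem hAm
  have hxeq : (x - ![L, 0]) +ᵥ ![L, 0] = x := by
    funext i; fin_cases i <;> simp [vadd_eq_add, Matrix.vecHead, Matrix.vecTail]
  rwa [hxeq] at hfin

lemma interior_K {L C : ℝ} (hC : 0 < C) (hCL : C ≤ L) :
    interior (Kset L C) = {x | x 0 < L ∧ x 1 < L ∧ L < x 0 + x 1 ∧ x 0 + x 1 < L + C} := by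
  apply subset_antisymm
  · intro x hx
    have h1 : x ∈ interior {y : Fin 2 → ℝ | 1 * y 0 + 0 * y 1 ≤ L} :=
      interior_mono (fun y hy => by simpa using hy.1) hx
    have h2 : x ∈ interior {y : Fin 2 → ℝ | 0 * y 0 + 1 * y 1 ≤ L} :=
      interior_mono (fun y hy => by simpa using hy.2.1) hx
    have h3 : x ∈ interior {y : Fin 2 → ℝ | (-1) * y 0 + (-1) * y 1 ≤ -L} :=
      interior_mono (fun y hy => by simp only [Set.mem_setOf_eq]; linarith [hy.2.2.1]) hx
    have h4 : x ∈ interior {y : Fin 2 → ℝ | 1 * y 0 + 1 * y 1 ≤ L + C} :=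
      interior_mono (fun y hy => by simp only [Set.mem_setOf_eq]; linarith [hy.2.2.2]) hx
    have g1 := interior_halfplane (Or.inl one_ne_zero) h1
    have g2 := interior_halfplane (Or.inr one_ne_zero) h2
    have g3 := interior_halfplane (a := -1) (b := -1) (r := -L) (Or.inl (by norm_num)) h3
    have g4 := interior_halfplane (a := 1) (b := 1) (Or.inl one_ne_zero) h4
    exact ⟨by linarith, by linarith, by linarith, by linarith⟩
  · apply interior_maximal
    · exact fun x hx => ⟨hx.1.le, hx.2.1.le, hx.2.2.1.le, hx.2.2.2.le⟩
    · have e1 : IsOpen {x : Fin 2 → ℝ | x 0 < L} := isOpen_lt (continuous_apply 0) continuous_const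
      have e2 : IsOpen {x : Fin 2 → ℝ | x 1 < L} := isOpen_lt (continuous_apply 1) continuous_const
      have e3 : IsOpen {x : Fin 2 → ℝ | L < x 0 + x 1} :=
        isOpen_lt continuous_const ((continuous_apply 0).add (continuous_apply 1))
      have e4 : IsOpen {x : Fin 2 → ℝ | x 0 + x 1 < L + C} :=
        isOpen_lt ((continuous_apply 0).add (continuous_apply 1)) continuous_const
      exact (e1.and (e2.and (e3.and e4)))


lemma intrinsicInterior_K {L C : ℝ} (hC : 0 < C) (hCL : C ≤ L) :
    intrinsicInterior ℝ (Kset L C) =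
      {x | x 0 < L ∧ x 1 < L ∧ L < x 0 + x 1 ∧ x 0 + x 1 < L + C} := by
  rw [← interior_K hC hCL]
  exact subset_antisymm (intrinsic_sub (K_affineSpan hC hCL)) interior_subset_intrinsicInterior

theorem amem_iff (h l : ℕ) (mu : Fin 2 → ℕ) :
    AMem 2 h (fun i => if i.1 = 0 then l else 0) mu ↔ mu 0 = l ∧ mu 1 ≤ l ∧ mu 1 ≤ h := by
  constructor
  · rintro ⟨hpart, hle, ⟨F⟩⟩
    have hle0 : l ≤ mu 0 := by simpa using hle 0
    have h00 : mu 0 = l := by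
      by_contra hne
      have hlt : l < mu 0 := lt_of_le_of_ne hle0 (Ne.symm hne)
      have h1 := F.one_le 0 l (by simp) hlt
      have h2 := F.upper 0 l (by simp) hlt
      simp at h2
      omega
    have h10 : mu 1 ≤ mu 0 := hpart 0 1 (by decide)
    have key : ∀ j, j < mu 1 → j + 1 ≤ F.entry 1 j := by
      intro j
      induction j with
      | zero => intro hj; exact F.one_le 1 0 (by simp) hj
      | succ n ih =>
        intro hj
        have h1 := F.row_strict 1 n (n+1) (by simp) (by omega) hj
        have h2 := ih (by omega)
        omega
    have h1h : mu 1 ≤ h := by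
      rcases Nat.eq_zero_or_pos (mu 1) with h0 | h0
      · omega
      · have h1 := key (mu 1 - 1) (by omega)
        have h2 := F.upper 1 (mu 1 - 1) (by simp) (by omega)
        simp at h2
        omega
    exact ⟨h00, by omega, h1h⟩
  · rintro ⟨h0, h1l, h1h⟩
    refine ⟨?_, ?_, ⟨⟨fun _ j => j + 1, ?_, ?_, ?_, ?_⟩⟩⟩
    · intro i j hij
      fin_cases i <;> fin_cases j <;> simp_all <;> omega
    · intro i; fin_cases i <;> simp <;> omega
    · intro i j _ _; show 1 ≤ j + 1; omega
    · intro i j hla hj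
      fin_cases i
      · simp at hla hj; omega
      · simp at hj ⊢; omega
    · intro i j k _ hjk _; show j + 1 < k + 1; omega
    · intro i k j hik hla hj _ _
      fin_cases i <;> fin_cases k <;> simp_all
      omega

lemma perm_fin2 (σ : Equiv.Perm (Fin 2)) : (σ 0 = 0 ∧ σ 1 = 1) ∨ (σ 0 = 1 ∧ σ 1 = 0) := by
  have h01 : σ 0 ≠ σ 1 := fun h => by simpa using σ.injective h
  have h0 : σ 0 = 0 ∨ σ 0 = 1 := by omega
  have h1 : σ 1 = 0 ∨ σ 1 = 1 := by omega
  rcases h0 with h | h <;> rcases h1 with h' | h' <;> simp_all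


lemma newtG_eq (h l : ℕ) (hh : 1 ≤ h) (hl : 1 ≤ l) :
    NewtG 2 h (fun i => if i.1 = 0 then l else 0) = Kset (l : ℝ) (((min h l : ℕ)) : ℝ) := by
  set c := min h l with hc
  have hc1 : 1 ≤ c := le_min hh hl
  have hcl : c ≤ l := min_le_right _ _
  rw [NewtG]
  apply subset_antisymm
  · apply convexHull_min _ (Kset_convex _ _)
    rintro x ⟨mu, hmu, σ, rfl⟩
    rw [amem_iff] at hmu
    obtain ⟨h0, h1l, h1h⟩ := hmu
    have hb : mu 1 ≤ c := le_min h1h h1l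
    rcases perm_fin2 σ with ⟨e0, e1⟩ | ⟨e0, e1⟩ <;>
      refine ⟨?_, ?_, ?_, ?_⟩ <;> simp only [e0, e1, h0] <;>
      [skip; skip; skip; skip; skip; skip; skip; skip] <;> push_cast <;>
      [exact_mod_cast le_refl (l:ℝ);
       exact_mod_cast Nat.cast_le.2 h1l;
       (push_cast; exact_mod_cast Nat.le_add_right l (mu 1));
       (exact_mod_cast Nat.add_le_add_left hb l);
       exact_mod_cast Nat.cast_le.2 h1l;
       exact_mod_cast le_refl (l:ℝ);
       exact_mod_cast Nat.le_add_left l (mu 1);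
       (push_cast; rw [add_comm]; exact_mod_cast Nat.add_le_add_left hb l)]
  · have hC : (0:ℝ) < (c:ℕ) := by exact_mod_cast hc1
    have hCL : ((c:ℕ):ℝ) ≤ l := by exact_mod_cast hcl
    apply K_subset_hull hC hCL
    · exact ⟨fun i => if i.1 = 0 then l else 0,
        (amem_iff h l _).2 ⟨by simp, by simp, by simp⟩, Equiv.refl _,
        by funext i; fin_cases i <;> simp⟩
    · exact ⟨fun i => if i.1 = 0 then l else c,
        (amem_iff h l _).2 ⟨by simp, by simpa using hcl, by simp [hc]⟩,
        Equiv.refl _, by funext i; fin_cases i <;> simp⟩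
    · exact ⟨fun i => if i.1 = 0 then l else c,
        (amem_iff h l _).2 ⟨by simp, by simpa using hcl, by simp [hc]⟩,
        Equiv.swap 0 1, by funext i; fin_cases i <;> simp [Equiv.swap_apply_left, Equiv.swap_apply_right]⟩
    · exact ⟨fun i => if i.1 = 0 then l else 0,
        (amem_iff h l _).2 ⟨by simp, by simp, by simp⟩, Equiv.swap 0 1,
        by funext i; fin_cases i <;> simp [Equiv.swap_apply_left, Equiv.swap_apply_right]⟩

set_option maxHeartbeats 4000000 in
lemma facet_cond {c : ℕ} (hc2 : 2 ≤ c) (hc3 : c ≤ 3)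
    (f : (Fin 2 → ℝ) →ₗ[ℝ] ℝ) (F : Set (Fin 2 → ℝ)) (hFne : F.Nonempty)
    (hFdef : F = {x ∈ Kset 3 (c:ℝ) | ∀ y ∈ Kset 3 (c:ℝ), f y ≤ f x})
    (hdim : Module.finrank ℝ ↥(vectorSpan ℝ F) + 1 =
      Module.finrank ℝ ↥(vectorSpan ℝ (Kset 3 (c:ℝ))))
    (x : Fin 2 → ℝ) (hxF : x ∈ F) (z : Fin 2 → ℤ) :
    ¬(f (fun i => ((2:ℤ):ℝ)) < f (fun i => (z i : ℝ)) ∧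
      f (fun i => (z i : ℝ)) < f x) := by
  rintro ⟨hlt1, hlt2⟩
  have hcR2 : (2:ℝ) ≤ (c:ℝ) := by exact_mod_cast hc2
  have hcR3 : ((c:ℝ)) ≤ 3 := by exact_mod_cast hc3
  have hf : ∀ y : Fin 2 → ℝ, f y = y 0 * f ![(1:ℝ), 0] + y 1 * f ![(0:ℝ), 1] := by
    intro y
    have hdec : y = y 0 • ![(1:ℝ), 0] + y 1 • ![(0:ℝ), 1] := by
      funext i
      fin_cases i <;> simp
    conv_lhs => rw [hdec]
    rw [map_add, map_smul, map_smul, smul_eq_mul, smul_eq_mul]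
  set α := f ![(1:ℝ), 0] with hα
  set β := f ![(0:ℝ), 1] with hβ
  have hA : ![(3:ℝ), 0] ∈ Kset 3 (c:ℝ) := by
    refine ⟨?_, ?_, ?_, ?_⟩ <;>
      simp only [Matrix.cons_val_zero, Matrix.cons_val_one, Matrix.head_cons] <;> linarith
  have hB : ![(3:ℝ), (c:ℝ)] ∈ Kset 3 (c:ℝ) := by
    refine ⟨?_, ?_, ?_, ?_⟩ <;>
      simp only [Matrix.cons_val_zero, Matrix.cons_val_one, Matrix.head_cons] <;> linarith
  have hC' : ![(c:ℝ), 3] ∈ Kset 3 (c:ℝ) := by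
    refine ⟨?_, ?_, ?_, ?_⟩ <;>
      simp only [Matrix.cons_val_zero, Matrix.cons_val_one, Matrix.head_cons] <;> linarith
  have hD : ![(0:ℝ), (3:ℝ)] ∈ Kset 3 (c:ℝ) := by
    refine ⟨?_, ?_, ?_, ?_⟩ <;>
      simp only [Matrix.cons_val_zero, Matrix.cons_val_one, Matrix.head_cons] <;> linarith
  have hxF' := hxF
  rw [hFdef] at hxF'
  obtain ⟨hxK, hxmax⟩ := hxF'
  obtain ⟨k1, k2, k3, k4⟩ := hxK
  have hmem : ∀ y ∈ F, (y 0 ≤ 3 ∧ y 1 ≤ 3 ∧ 3 ≤ y 0 + y 1 ∧ y 0 + y 1 ≤ 3 + (c:ℝ)) ∧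
      y 0 * α + y 1 * β = f x := by
    intro y hy
    rw [hFdef] at hy
    obtain ⟨hyK, hymax⟩ := hy
    refine ⟨hyK, ?_⟩
    rw [← hf y]
    exact le_antisymm (hxmax y hyK) (hymax x ⟨k1, k2, k3, k4⟩)
  have hfx : f x = x 0 * α + x 1 * β := hf x
  have hA' : 3 * α ≤ f x := by
    have h0 := hxmax _ hA
    rw [hf ![(3:ℝ), 0]] at h0
    simp only [Matrix.cons_val_zero, Matrix.cons_val_one, Matrix.head_cons] at h0
    linarith
  have hB' : 3 * α + (c:ℝ) * β ≤ f x := by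
    have h0 := hxmax _ hB
    rw [hf ![(3:ℝ), (c:ℝ)]] at h0
    simp only [Matrix.cons_val_zero, Matrix.cons_val_one, Matrix.head_cons] at h0
    linarith
  have hC'' : (c:ℝ) * α + 3 * β ≤ f x := by
    have h0 := hxmax _ hC'
    rw [hf ![(c:ℝ), 3]] at h0
    simp only [Matrix.cons_val_zero, Matrix.cons_val_one, Matrix.head_cons] at h0
    linarith
  have hD' : 3 * β ≤ f x := by
    have h0 := hxmax _ hD
    rw [hf ![(0:ℝ), (3:ℝ)]] at h0
    simp only [Matrix.cons_val_zero, Matrix.cons_val_one, Matrix.head_cons] at h0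
    linarith
  have hp : f (fun _ : Fin 2 => ((2:ℤ):ℝ)) = 2 * α + 2 * β := by
    rw [hf]; norm_num
  have hzval : f (fun i => (z i : ℝ)) = (z 0 : ℝ) * α + (z 1 : ℝ) * β := by rw [hf]
  rw [hp, hzval] at hlt1
  rw [hzval] at hlt2
  have hdim2 : Module.finrank ℝ ↥(vectorSpan ℝ (Kset 3 (c:ℝ))) = 2 := by
    rw [← direction_affineSpan, K_affineSpan (by linarith : (0:ℝ) < (c:ℝ)) (by linarith),
      AffineSubspace.direction_top]
    simp [Module.finrank_fin_fun]
  have hdistinct : ∃ y₁ ∈ F, ∃ y₂ ∈ F, y₁ ≠ y₂ := by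
    by_contra hcon
    push_neg at hcon
    obtain ⟨w, hw⟩ := hFne
    have hsub : F ⊆ {w} := fun y hy => hcon y hy w hw
    have hle := vectorSpan_mono ℝ hsub
    rw [vectorSpan_singleton] at hle
    rw [le_bot_iff.1 hle, hdim2] at hdim
    simp at hdim
  obtain ⟨y₁, hy₁, y₂, hy₂, hne⟩ := hdistinct
  obtain ⟨⟨a1, a2, a3, a4⟩, aM⟩ := hmem y₁ hy₁
  obtain ⟨⟨b1, b2, b3, b4⟩, bM⟩ := hmem y₂ hy₂
  have a0nn : 0 ≤ y₁ 0 := by linarith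
  have a1nn : 0 ≤ y₁ 1 := by linarith
  have b0nn : 0 ≤ y₂ 0 := by linarith
  have b1nn : 0 ≤ y₂ 1 := by linarith
  have gap01 : ¬((2:ℝ) < (z 0 : ℝ) ∧ ((z 0 : ℝ)) < 3) := by
    rintro ⟨g1, g2⟩
    have i1 : (2:ℤ) < z 0 := by exact_mod_cast g1
    have i2 : z 0 < (3:ℤ) := by exact_mod_cast g2
    omega
  have gap11 : ¬((2:ℝ) < (z 1 : ℝ) ∧ ((z 1 : ℝ)) < 3) := by
    rintro ⟨g1, g2⟩
    have i1 : (2:ℤ) < z 1 := by exact_mod_cast g1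
    have i2 : z 1 < (3:ℤ) := by exact_mod_cast g2
    omega
  have gapsum : ∀ n : ℤ, ((n:ℝ) < (z 0 : ℝ) + (z 1 : ℝ) ∧ (z 0 : ℝ) + (z 1 : ℝ) < (n:ℝ) + 1) →
      False := by
    rintro n ⟨g1, g2⟩
    have i1 : n < z 0 + z 1 := by exact_mod_cast g1
    have i2 : z 0 + z 1 < n + 1 := by
      have h0 : (z 0 : ℝ) + (z 1 : ℝ) < ((n + 1 : ℤ) : ℝ) := by push_cast; linarith
      exact_mod_cast h0
    omega
  clear hf hmem hxmax hp hzval hdim hdim2 hFdef hFne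
  rcases lt_trichotomy 0 α with hα1 | hα1 | hα1 <;> rcases lt_trichotomy 0 β with hβ1 | hβ1 | hβ1
  · -- α > 0, β > 0
    rcases lt_trichotomy α β with hab | hab | hab
    · -- α < β : pin (c, 3)
      have pin : ∀ y : Fin 2 → ℝ, (y 0 ≤ 3 ∧ y 1 ≤ 3 ∧ 3 ≤ y 0 + y 1 ∧ y 0 + y 1 ≤ 3 + (c:ℝ)) →
          y 0 * α + y 1 * β = f x → y = ![(c:ℝ), 3] := by
        rintro y ⟨m1, m2, m3, m4⟩ hM
        have t2 : 0 ≤ α * (3 + (c:ℝ) - (y 0 + y 1)) := mul_nonneg hα1.le (by linarith)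
        have h1 : (β - α) * 3 ≤ (β - α) * y 1 := by nlinarith [t2, hC'', hM]
        have e1 : y 1 = 3 := le_antisymm m2 (le_of_mul_le_mul_left h1 (by linarith))
        rw [e1] at hM
        have h2 : α * (c:ℝ) ≤ α * y 0 := by nlinarith [hM, hC'']
        have e2 : y 0 = (c:ℝ) := le_antisymm (by linarith) (le_of_mul_le_mul_left h2 hα1)
        funext i; fin_cases i <;> simp [e1, e2]
      exact hne ((pin y₁ ⟨a1, a2, a3, a4⟩ aM).trans (pin y₂ ⟨b1, b2, b3, b4⟩ bM).symm)
    · -- α = β > 0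
      have hcase : c = 2 ∨ c = 3 := by omega
      rcases hcase with hc | hc
      · -- gap: 4 < z0 + z1 < 5
        rw [hc] at hB' k4
        push_cast at hB' k4
        rw [← hab] at hfx hlt1 hlt2 hB'
        have t := mul_le_mul_of_nonneg_right k4 hα1.le
        have up : f x ≤ 5 * α := by nlinarith [hfx, t]
        have lo : 5 * α ≤ f x := by linarith [hB']
        refine gapsum 4 ⟨?_, ?_⟩
        · have h4 : α * 4 < α * ((z 0 : ℝ) + (z 1 : ℝ)) := by nlinarith [hlt1]
          push_cast
          linarith [lt_of_mul_lt_mul_left h4 hα1.le]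
        · have h5 : α * ((z 0 : ℝ) + (z 1 : ℝ)) < α * 5 := by nlinarith [hlt2, up]
          push_cast
          linarith [lt_of_mul_lt_mul_left h5 hα1.le]
      · -- pin (3, 3)
        rw [hc] at hB'
        push_cast at hB'
        have pin : ∀ y : Fin 2 → ℝ, (y 0 ≤ 3 ∧ y 1 ≤ 3 ∧ 3 ≤ y 0 + y 1 ∧ y 0 + y 1 ≤ 3 + (c:ℝ)) →
            y 0 * α + y 1 * β = f x → y = ![(3:ℝ), 3] := by
          rintro y ⟨m1, m2, m3, m4⟩ hM
          rw [← hab] at hM hB'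
          have h1 : α * 6 ≤ α * (y 0 + y 1) := by nlinarith [hM, hB']
          have hs := le_of_mul_le_mul_left h1 hα1
          have e1 : y 0 = 3 := le_antisymm m1 (by linarith)
          have e2 : y 1 = 3 := le_antisymm m2 (by linarith)
          funext i; fin_cases i <;> simp [e1, e2]
        exact hne ((pin y₁ ⟨a1, a2, a3, a4⟩ aM).trans (pin y₂ ⟨b1, b2, b3, b4⟩ bM).symm)
    · -- β < α : pin (3, c)
      have pin : ∀ y : Fin 2 → ℝ, (y 0 ≤ 3 ∧ y 1 ≤ 3 ∧ 3 ≤ y 0 + y 1 ∧ y 0 + y 1 ≤ 3 + (c:ℝ)) →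
          y 0 * α + y 1 * β = f x → y = ![(3:ℝ), (c:ℝ)] := by
        rintro y ⟨m1, m2, m3, m4⟩ hM
        have t2 : 0 ≤ β * (3 + (c:ℝ) - (y 0 + y 1)) := mul_nonneg hβ1.le (by linarith)
        have h1 : (α - β) * 3 ≤ (α - β) * y 0 := by nlinarith [t2, hB', hM]
        have e1 : y 0 = 3 := le_antisymm m1 (le_of_mul_le_mul_left h1 (by linarith))
        rw [e1] at hM
        have h2 : β * (c:ℝ) ≤ β * y 1 := by nlinarith [hM, hB']
        have e2 : y 1 = (c:ℝ) := le_antisymm (by linarith) (le_of_mul_le_mul_left h2 hβ1)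
        funext i; fin_cases i <;> simp [e1, e2]
      exact hne ((pin y₁ ⟨a1, a2, a3, a4⟩ aM).trans (pin y₂ ⟨b1, b2, b3, b4⟩ bM).symm)
  · -- α > 0, β = 0 : gap 2 < z0 < 3
    rw [← hβ1] at hlt1 hlt2 hfx
    have t := mul_le_mul_of_nonneg_right k1 hα1.le
    have up : f x ≤ 3 * α := by nlinarith [hfx, t]
    refine gap01 ⟨?_, ?_⟩
    · have h2 : α * 2 < α * (z 0 : ℝ) := by nlinarith [hlt1]
      exact lt_of_mul_lt_mul_left h2 hα1.le
    · have h3 : α * (z 0 : ℝ) < α * 3 := by nlinarith [hlt2, up]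
      exact lt_of_mul_lt_mul_left h3 hα1.le
  · -- α > 0, β < 0 : pin (3, 0)
    have pin : ∀ y : Fin 2 → ℝ, (y 0 ≤ 3 ∧ y 1 ≤ 3 ∧ 3 ≤ y 0 + y 1 ∧ y 0 + y 1 ≤ 3 + (c:ℝ)) →
        y 0 * α + y 1 * β = f x → y = ![(3:ℝ), 0] := by
      rintro y ⟨m1, m2, m3, m4⟩ hM
      have hynn : 0 ≤ y 1 := by linarith
      have t1 : y 1 * β ≤ 0 := by
        have := mul_le_mul_of_nonneg_left hβ1.le hynn
        simpa using this
      have h1 : α * 3 ≤ α * y 0 := by nlinarith [hA', hM, t1]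
      have e1 : y 0 = 3 := le_antisymm m1 (le_of_mul_le_mul_left h1 hα1)
      rw [e1] at hM
      have h2 : (-β) * y 1 ≤ (-β) * 0 := by nlinarith [hM, hA']
      have e2 : y 1 = 0 := le_antisymm (le_of_mul_le_mul_left h2 (by linarith)) hynn
      funext i; fin_cases i <;> simp [e1, e2]
    exact hne ((pin y₁ ⟨a1, a2, a3, a4⟩ aM).trans (pin y₂ ⟨b1, b2, b3, b4⟩ bM).symm)
  · -- α = 0, β > 0 : gap 2 < z1 < 3
    rw [← hα1] at hlt1 hlt2 hfx
    have t := mul_le_mul_of_nonneg_right k2 hβ1.le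
    have up : f x ≤ 3 * β := by nlinarith [hfx, t]
    refine gap11 ⟨?_, ?_⟩
    · have h2 : β * 2 < β * (z 1 : ℝ) := by nlinarith [hlt1]
      exact lt_of_mul_lt_mul_left h2 hβ1.le
    · have h3 : β * (z 1 : ℝ) < β * 3 := by nlinarith [hlt2, up]
      exact lt_of_mul_lt_mul_left h3 hβ1.le
  · -- α = 0, β = 0
    rw [← hα1, ← hβ1] at hlt1
    norm_num at hlt1
  · -- α = 0, β < 0 : pin (3, 0)
    have pin : ∀ y : Fin 2 → ℝ, (y 0 ≤ 3 ∧ y 1 ≤ 3 ∧ 3 ≤ y 0 + y 1 ∧ y 0 + y 1 ≤ 3 + (c:ℝ)) →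
        y 0 * α + y 1 * β = f x → y = ![(3:ℝ), 0] := by
      rintro y ⟨m1, m2, m3, m4⟩ hM
      have hynn : 0 ≤ y 1 := by linarith
      rw [← hα1] at hM hA'
      have h2 : (-β) * y 1 ≤ (-β) * 0 := by nlinarith [hM, hA']
      have e2 : y 1 = 0 := le_antisymm (le_of_mul_le_mul_left h2 (by linarith)) hynn
      have e1 : y 0 = 3 := le_antisymm m1 (by linarith)
      funext i; fin_cases i <;> simp [e1, e2]
    exact hne ((pin y₁ ⟨a1, a2, a3, a4⟩ aM).trans (pin y₂ ⟨b1, b2, b3, b4⟩ bM).symm)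
  · -- α < 0, β > 0 : pin (0, 3)
    have pin : ∀ y : Fin 2 → ℝ, (y 0 ≤ 3 ∧ y 1 ≤ 3 ∧ 3 ≤ y 0 + y 1 ∧ y 0 + y 1 ≤ 3 + (c:ℝ)) →
        y 0 * α + y 1 * β = f x → y = ![(0:ℝ), 3] := by
      rintro y ⟨m1, m2, m3, m4⟩ hM
      have hynn : 0 ≤ y 0 := by linarith
      have t1 : y 0 * α ≤ 0 := by
        have := mul_le_mul_of_nonneg_left hα1.le hynn
        simpa using this
      have h1 : β * 3 ≤ β * y 1 := by nlinarith [hD', hM, t1]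
      have e2 : y 1 = 3 := le_antisymm m2 (le_of_mul_le_mul_left h1 hβ1)
      rw [e2] at hM
      have h2 : (-α) * y 0 ≤ (-α) * 0 := by nlinarith [hM, hD']
      have e1 : y 0 = 0 := le_antisymm (le_of_mul_le_mul_left h2 (by linarith)) hynn
      funext i; fin_cases i <;> simp [e1, e2]
    exact hne ((pin y₁ ⟨a1, a2, a3, a4⟩ aM).trans (pin y₂ ⟨b1, b2, b3, b4⟩ bM).symm)
  · -- α < 0, β = 0 : pin (0, 3)
    have pin : ∀ y : Fin 2 → ℝ, (y 0 ≤ 3 ∧ y 1 ≤ 3 ∧ 3 ≤ y 0 + y 1 ∧ y 0 + y 1 ≤ 3 + (c:ℝ)) →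
        y 0 * α + y 1 * β = f x → y = ![(0:ℝ), 3] := by
      rintro y ⟨m1, m2, m3, m4⟩ hM
      have hynn : 0 ≤ y 0 := by linarith
      rw [← hβ1] at hM hD'
      have h2 : (-α) * y 0 ≤ (-α) * 0 := by nlinarith [hM, hD']
      have e1 : y 0 = 0 := le_antisymm (le_of_mul_le_mul_left h2 (by linarith)) hynn
      have e2 : y 1 = 3 := le_antisymm m2 (by linarith)
      funext i; fin_cases i <;> simp [e1, e2]
    exact hne ((pin y₁ ⟨a1, a2, a3, a4⟩ aM).trans (pin y₂ ⟨b1, b2, b3, b4⟩ bM).symm)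
  · -- α < 0, β < 0
    rcases lt_trichotomy α β with hab | hab | hab
    · -- α < β < 0 : pin (0, 3)
      have pin : ∀ y : Fin 2 → ℝ, (y 0 ≤ 3 ∧ y 1 ≤ 3 ∧ 3 ≤ y 0 + y 1 ∧ y 0 + y 1 ≤ 3 + (c:ℝ)) →
          y 0 * α + y 1 * β = f x → y = ![(0:ℝ), 3] := by
        rintro y ⟨m1, m2, m3, m4⟩ hM
        have hynn : 0 ≤ y 0 := by linarith
        have t2 : 0 ≤ (-α) * (y 0 + y 1 - 3) := mul_nonneg (by linarith) (by linarith)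
        have h1 : (β - α) * 3 ≤ (β - α) * y 1 := by nlinarith [t2, hD', hM]
        have e2 : y 1 = 3 := le_antisymm m2 (le_of_mul_le_mul_left h1 (by linarith))
        rw [e2] at hM
        have h2 : (-α) * y 0 ≤ (-α) * 0 := by nlinarith [hM, hD']
        have e1 : y 0 = 0 := le_antisymm (le_of_mul_le_mul_left h2 (by linarith)) hynn
        funext i; fin_cases i <;> simp [e1, e2]
      exact hne ((pin y₁ ⟨a1, a2, a3, a4⟩ aM).trans (pin y₂ ⟨b1, b2, b3, b4⟩ bM).symm)
    · -- α = β < 0 : gap 3 < z0 + z1 < 4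
      rw [← hab] at hfx hlt1 hlt2
      have t := mul_le_mul_of_nonpos_right k3 hα1.le
      have up : f x ≤ 3 * α := by nlinarith [hfx, t]
      refine gapsum 3 ⟨?_, ?_⟩
      · have h3 : (-α) * 3 < (-α) * ((z 0 : ℝ) + (z 1 : ℝ)) := by nlinarith [hlt2, up]
        push_cast
        linarith [lt_of_mul_lt_mul_left h3 (by linarith : (0:ℝ) ≤ -α)]
      · have h4 : (-α) * ((z 0 : ℝ) + (z 1 : ℝ)) < (-α) * 4 := by nlinarith [hlt1]
        push_cast
        linarith [lt_of_mul_lt_mul_left h4 (by linarith : (0:ℝ) ≤ -α)]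
    · -- β < α < 0 : pin (3, 0)
      have pin : ∀ y : Fin 2 → ℝ, (y 0 ≤ 3 ∧ y 1 ≤ 3 ∧ 3 ≤ y 0 + y 1 ∧ y 0 + y 1 ≤ 3 + (c:ℝ)) →
          y 0 * α + y 1 * β = f x → y = ![(3:ℝ), 0] := by
        rintro y ⟨m1, m2, m3, m4⟩ hM
        have hynn : 0 ≤ y 1 := by linarith
        have t1 : 0 ≤ (-α) * (y 0 + y 1 - 3) := mul_nonneg (by linarith) (by linarith)
        have h1 : (α - β) * y 1 ≤ (α - β) * 0 := by nlinarith [t1, hA', hM]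
        have e2 : y 1 = 0 :=
          le_antisymm (le_of_mul_le_mul_left h1 (by linarith : (0:ℝ) < α - β)) hynn
        have e1 : y 0 = 3 := le_antisymm m1 (by linarith)
        funext i; fin_cases i <;> simp [e1, e2]
      exact hne ((pin y₁ ⟨a1, a2, a3, a4⟩ aM).trans (pin y₂ ⟨b1, b2, b3, b4⟩ bM).symm)

theorem newtG_two_vars_reflexive :
    (∀ h l : ℕ, 1 ≤ h → 0 < l →
      ((∃ p : Fin 2 → ℤ,
          ReflexivePolytope 2 (NewtG 2 h (fun i => if i.1 = 0 then l else 0)) p)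
        ↔ (l = 3 ∧ 2 ≤ h))) ∧
    (∀ h : ℕ, 3 ≤ h →
      NewtG 2 h (fun i => if i.1 = 0 then 3 else 0) =
        convexHull ℝ {x : Fin 2 → ℝ |
          x = (fun i => if i.1 = 0 then (3 : ℝ) else 0) ∨
          x = (fun _ => (3 : ℝ)) ∨
          x = (fun i => if i.1 = 0 then (0 : ℝ) else 3)} ∧
      ∀ z : Fin 2 → ℤ,
        ((fun i => (z i : ℝ)) ∈
            intrinsicInterior ℝ (NewtG 2 h (fun i => if i.1 = 0 then 3 else 0))
          ↔ z = fun _ => 2)) := by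
  have cast3 : ((3:ℕ):ℝ) = (3:ℝ) := by norm_num
  constructor
  · intro h l hh hl
    have hNewt := newtG_eq h l hh hl
    have hc1 : 1 ≤ min h l := le_min hh hl
    have hcl : min h l ≤ l := min_le_right _ _
    have hCpos : (0:ℝ) < ((min h l : ℕ) : ℝ) := by exact_mod_cast hc1
    have hCL : ((min h l : ℕ) : ℝ) ≤ ((l:ℕ):ℝ) := by exact_mod_cast hcl
    constructor
    · rintro ⟨p, hp⟩
      unfold ReflexivePolytope at hp
      obtain ⟨hInt, hUniq, hFacet⟩ := hp
      rw [hNewt, intrinsicInterior_K hCpos hCL] at hInt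
      simp only [Set.mem_setOf_eq] at hInt
      obtain ⟨s1, s2, s3, s4⟩ := hInt
      have i1 : p 0 < (l:ℤ) := by exact_mod_cast s1
      have i2 : p 1 < (l:ℤ) := by exact_mod_cast s2
      have i3 : (l:ℤ) < p 0 + p 1 := by exact_mod_cast s3
      have i4 : p 0 + p 1 < (l:ℤ) + ((min h l : ℕ):ℤ) := by exact_mod_cast s4
      have hl3 : 3 ≤ l := by omega
      have hh2 : 2 ≤ h := by omega
      have hc2 : 2 ≤ min h l := by omega
      have hl3' : l ≤ 3 := by
        by_contra hl4
        push_neg at hl4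
        have hl4R : (4:ℝ) ≤ ((l:ℕ):ℝ) := by exact_mod_cast hl4
        have hc2R : (2:ℝ) ≤ ((min h l : ℕ):ℝ) := by exact_mod_cast hc2
        push_cast at hc2R
        have m1 : (fun i => (((fun j : Fin 2 => if j.1 = 0 then (2:ℤ) else (l:ℤ) - 1) i : ℤ) : ℝ)) ∈
            intrinsicInterior ℝ (NewtG 2 h (fun i => if i.1 = 0 then l else 0)) := by
          rw [hNewt, intrinsicInterior_K hCpos hCL]
          refine ⟨?_, ?_, ?_, ?_⟩ <;> simp only [Set.mem_setOf_eq] <;> norm_num <;> push_cast <;>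
            linarith
        have m2 : (fun i => (((fun j : Fin 2 => if j.1 = 0 then (l:ℤ) - 1 else (2:ℤ)) i : ℤ) : ℝ)) ∈
            intrinsicInterior ℝ (NewtG 2 h (fun i => if i.1 = 0 then l else 0)) := by
          rw [hNewt, intrinsicInterior_K hCpos hCL]
          refine ⟨?_, ?_, ?_, ?_⟩ <;> simp only [Set.mem_setOf_eq] <;> norm_num <;> push_cast <;>
            linarith
        have e1 := hUniq _ m1
        have e2 := hUniq _ m2
        have := congrFun (e1.trans e2.symm) 0
        simp at this
        omega
      exact ⟨by omega, hh2⟩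
    · rintro ⟨rfl, hh2⟩
      rw [cast3] at hNewt hCL
      have hc2 : 2 ≤ min h 3 := le_min hh2 (by norm_num)
      have hc3 : min h 3 ≤ 3 := min_le_right _ _
      have hc2R : (2:ℝ) ≤ ((min h 3 : ℕ):ℝ) := by exact_mod_cast hc2
      push_cast at hc2R
      refine ⟨fun _ => 2, ?_, ?_, ?_⟩
      · rw [hNewt, intrinsicInterior_K hCpos hCL]
        refine ⟨by norm_num, by norm_num, by norm_num, ?_⟩
        simp only [Set.mem_setOf_eq]
        push_cast
        linarith
      · intro q hq
        rw [hNewt, intrinsicInterior_K hCpos hCL] at hq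
        obtain ⟨s1, s2, s3, s4⟩ := hq
        simp only at s1 s2 s3 s4
        have i1 : q 0 < (3:ℤ) := by exact_mod_cast s1
        have i2 : q 1 < (3:ℤ) := by exact_mod_cast s2
        have i3 : (3:ℤ) < q 0 + q 1 := by exact_mod_cast s3
        funext i
        fin_cases i
        · show q 0 = 2; omega
        · show q 1 = 2; omega
      · intro f F hFne hFdef hdim x hxF z hz
        rw [hNewt] at hFdef hdim
        exact facet_cond hc2 hc3 f F hFne hFdef hdim x hxF z
  · intro h hh3
    have hNewt := newtG_eq h 3 (by omega) (by norm_num)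
    rw [cast3, min_eq_right hh3] at hNewt
    have h03 : (0:ℝ) < ((3:ℕ):ℝ) := by norm_num
    have h33 : ((3:ℕ):ℝ) ≤ ((3:ℕ):ℝ) := le_refl _
    constructor
    · rw [hNewt]
      apply subset_antisymm
      · rw [cast3] at h03
        apply K_subset_hull h03 (le_refl (3:ℝ))
        · exact Or.inl (by funext i; fin_cases i <;> simp)
        · exact Or.inr (Or.inl (by funext i; fin_cases i <;> simp))
        · exact Or.inr (Or.inl (by funext i; fin_cases i <;> simp))
        · exact Or.inr (Or.inr (by funext i; fin_cases i <;> simp))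
      · apply convexHull_min _ (Kset_convex _ _)
        rintro x (rfl | rfl | rfl) <;> refine ⟨?_, ?_, ?_, ?_⟩ <;>
          simp only [Set.mem_setOf_eq] <;> norm_num
    · intro z
      rw [hNewt, cast3] at *
      rw [intrinsicInterior_K (by norm_num : (0:ℝ) < 3) (le_refl (3:ℝ))]
      constructor
      · rintro ⟨s1, s2, s3, s4⟩
        simp only at s1 s2 s3 s4
        have i1 : z 0 < (3:ℤ) := by exact_mod_cast s1
        have i2 : z 1 < (3:ℤ) := by exact_mod_cast s2
        have i3 : (3:ℤ) < z 0 + z 1 := by exact_mod_cast s3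
        funext i
        fin_cases i
        · show z 0 = 2; omega
        · show z 1 = 2; omega
      · rintro rfl
        refine ⟨by norm_num, by norm_num, by norm_num, by norm_num⟩
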